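/- Let n ≥ 2 and let I_1, ..., I_n be i.i.d. random variables with the equal revenue distribution. Then P[(1/n) · Σ_{i=1}^n I_i ≥ (log n)/2] ≥ 1/2. -/

import Mathlib

open MeasureTheory

open MeasureTheory Set
open scoped NNReal ENNReal

noncomputable def erD : ℝ → ℝ≥0 := (Set.Ioi (1:ℝ)).indicator fun t => Real.toNNReal ((t^2)⁻¹)

lemma erD_meas : Measurable erD :=
  Measurable.indicator (by measurability) measurableSet_Ioi

noncomputable def erM : Measure ℝ := volume.withDensity fun t => (erD t : ℝ≥0∞)

lemma integrableOn_sq_inv_mul {a b : ℝ} (ha : 0 < a) {f : ℝ → ℝ} (hf : ContinuousOn f (Set.Icc a b)) :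
    IntegrableOn (fun t : ℝ => (t^2)⁻¹ * f t) (Set.Ioc a b) := by
  apply (ContinuousOn.integrableOn_Icc ?_).mono_set Set.Ioc_subset_Icc_self
  apply ContinuousOn.mul ?_ hf
  intro t ht
  exact ContinuousAt.continuousWithinAt (by
    apply ContinuousAt.inv₀ (by fun_prop)
    have : 0 < t := lt_of_lt_of_le ha ht.1
    positivity)

lemma integrableOn_sq_inv {a b : ℝ} (ha : 0 < a) :
    IntegrableOn (fun t : ℝ => (t^2)⁻¹) (Set.Ioc a b) := by
  simpa using integrableOn_sq_inv_mul ha (f := fun _ => (1:ℝ)) continuousOn_const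

lemma integral_sq_inv_Ioc {x : ℝ} (hx : 1 ≤ x) :
    ∫ t in Set.Ioc 1 x, (t^2)⁻¹ = 1 - 1/x := by
  rw [← intervalIntegral.integral_of_le hx]
  have h0 : (0:ℝ) ∉ Set.uIcc 1 x := by
    rw [Set.uIcc_of_le hx]; intro h; linarith [h.1]
  have h := integral_zpow (a := 1) (b := x) (n := -2) (Or.inr ⟨by decide, h0⟩)
  have e : ∀ t : ℝ, (t:ℝ) ^ (-2 : ℤ) = (t^2)⁻¹ := by
    intro t; rw [zpow_neg]; norm_cast
  simp only [e] at h
  rw [h]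
  have hx0 : x ≠ 0 := by positivity
  rw [show (-2 + 1 : ℤ) = -1 by decide]
  simp only [zpow_neg, zpow_one]
  push_cast
  field_simp
  ring

lemma erD_coe_eq (t : ℝ) :
    ((erD t : ℝ≥0∞)) = (Set.Ioi (1:ℝ)).indicator (fun t => ENNReal.ofReal ((t^2)⁻¹)) t := by
  unfold erD
  by_cases h : t ∈ Set.Ioi (1:ℝ) <;>
    simp [Set.indicator_of_mem, Set.indicator_of_notMem, h, ENNReal.ofReal]

lemma erM_Iic (x : ℝ) :
    erM (Set.Iic x) = if 1 ≤ x then ENNReal.ofReal (1 - 1/x) else 0 := by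
  rw [erM, withDensity_apply _ measurableSet_Iic]
  simp only [erD_coe_eq]
  rw [lintegral_indicator measurableSet_Ioi, Measure.restrict_restrict measurableSet_Ioi]
  have hset : Set.Ioi (1:ℝ) ∩ Set.Iic x = Set.Ioc 1 x := by
    ext t; simp [Set.mem_Ioc, and_comm]
  rw [hset]
  by_cases hx : 1 ≤ x
  · rw [if_pos hx, ← ofReal_integral_eq_lintegral_ofReal (integrableOn_sq_inv one_pos)]
    · rw [integral_sq_inv_Ioc hx]
    · filter_upwards with t; positivity
  · rw [if_neg hx, Set.Ioc_eq_empty (by intro h; exact hx (le_of_lt h)), Measure.restrict_empty,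
      lintegral_zero_measure]

instance : IsProbabilityMeasure erM := by
  constructor
  have h1 : Filter.Tendsto (fun x : ℝ => erM (Set.Iic x)) Filter.atTop (nhds (erM Set.univ)) := by
    have := MeasureTheory.tendsto_measure_Iic_atTop (μ := erM)
    simpa using this
  have h2 : Filter.Tendsto (fun x : ℝ => erM (Set.Iic x)) Filter.atTop (nhds 1) := by
    have : Filter.Tendsto (fun x : ℝ => ENNReal.ofReal (1 - 1/x)) Filter.atTop (nhds 1) := by
      have h3 : Filter.Tendsto (fun x : ℝ => 1 - 1/x) Filter.atTop (nhds 1) := by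
        simpa [one_div] using Filter.Tendsto.const_sub (1:ℝ) tendsto_inv_atTop_zero
      have := (ENNReal.continuous_ofReal.tendsto 1).comp h3
      simpa [Function.comp_def] using this
    apply this.congr' ?_
    filter_upwards [Filter.eventually_ge_atTop (1:ℝ)] with x hx
    rw [erM_Iic, if_pos hx]
  exact tendsto_nhds_unique h1 h2

lemma law_eq {Ω : Type*} [MeasurableSpace Ω] (μ : Measure Ω) [IsProbabilityMeasure μ]
    (X : Ω → ℝ) (hm : Measurable X) (hsupp : ∀ᵐ ω ∂μ, 1 ≤ X ω)
    (hcdf : ∀ x : ℝ, 1 ≤ x → (μ {ω | X ω ≤ x}).toReal = 1 - 1 / x) :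
    μ.map X = erM := by
  have : IsProbabilityMeasure (μ.map X) := Measure.isProbabilityMeasure_map hm.aemeasurable
  apply Measure.ext_of_Iic
  intro x
  rw [Measure.map_apply hm measurableSet_Iic, erM_Iic]
  have hpre : X ⁻¹' Set.Iic x = {ω | X ω ≤ x} := rfl
  by_cases hx : 1 ≤ x
  · rw [if_pos hx, hpre, ← hcdf x hx, ENNReal.ofReal_toReal (measure_ne_top μ _)]
  · rw [if_neg hx]
    refine measure_mono_null (fun ω hw => ?_) (ae_iff.mp hsupp)
    simp only [Set.mem_setOf_eq, not_le]
    calc X ω ≤ x := hw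
    _ < 1 := lt_of_not_ge hx

lemma sq_inv_eq_rpow {t : ℝ} (ht : 0 < t) : (t^2)⁻¹ = t ^ (-2:ℝ) := by
  rw [Real.rpow_neg ht.le, show (2:ℝ) = ((2:ℕ):ℝ) by norm_num, Real.rpow_natCast]

lemma integrableOn_Ioi_sq_inv_mul_const {c k : ℝ} (hc : 0 < c) :
    IntegrableOn (fun t : ℝ => (t^2)⁻¹ * k) (Set.Ioi c) := by
  refine IntegrableOn.congr_fun
    ((integrableOn_Ioi_rpow_of_lt (by norm_num : (-2:ℝ) < -1) hc).mul_const k)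
    (fun t ht => ?_) measurableSet_Ioi
  rw [sq_inv_eq_rpow (lt_trans hc ht)]

lemma integral_Ioi_sq_inv_mul_const {c k : ℝ} (hc : 0 < c) :
    ∫ t in Set.Ioi c, (t^2)⁻¹ * k = c⁻¹ * k := by
  rw [setIntegral_congr_fun measurableSet_Ioi
    (g := fun t : ℝ => t ^ (-2:ℝ) * k) (fun t ht => by rw [sq_inv_eq_rpow (lt_trans hc ht)]),
    MeasureTheory.integral_mul_const, integral_Ioi_rpow_of_lt (by norm_num : (-2:ℝ) < -1) hc,
    show (-2 + 1 : ℝ) = -1 by norm_num, Real.rpow_neg_one]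
  field_simp

lemma erM_integral (f : ℝ → ℝ) :
    ∫ t, f t ∂erM = ∫ t in Set.Ioi (1:ℝ), (t^2)⁻¹ * f t := by
  rw [erM, integral_withDensity_eq_integral_smul erD_meas, ← integral_indicator measurableSet_Ioi]
  congr 1
  funext t
  by_cases ht : t ∈ Set.Ioi (1:ℝ)
  · have h0 : (0:ℝ) ≤ (t^2)⁻¹ := by positivity
    simp only [erD, Set.indicator_of_mem ht]
    rw [NNReal.smul_def, Real.coe_toNNReal _ h0, smul_eq_mul]
  · simp only [erD, Set.indicator_of_notMem ht]
    simp

lemma erM_min_moment {m : ℝ} (hm : 1 ≤ m) :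
    ∫ t, min t m ∂erM = Real.log m + 1 := by
  rw [erM_integral, ← Set.Ioc_union_Ioi_eq_Ioi hm,
    setIntegral_union Set.Ioc_disjoint_Ioi_same measurableSet_Ioi
      (integrableOn_sq_inv_mul one_pos (Continuous.continuousOn (f := fun t : ℝ => min t m) (by fun_prop)))
      ((integrableOn_Ioi_sq_inv_mul_const (lt_of_lt_of_le one_pos hm)).congr_fun
        (fun t ht => by rw [min_eq_right (le_of_lt ht)]) measurableSet_Ioi)]
  have h1 : ∫ t in Set.Ioc 1 m, (t^2)⁻¹ * min t m = Real.log m := by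
    rw [setIntegral_congr_fun measurableSet_Ioc (g := fun t : ℝ => t⁻¹) ?_]
    · rw [← intervalIntegral.integral_of_le hm, integral_inv_of_pos one_pos
        (lt_of_lt_of_le one_pos hm)]
      simp
    · intro t ht
      have ht0 : t ≠ 0 := by have := ht.1; positivity
      show (t^2)⁻¹ * min t m = t⁻¹
      rw [min_eq_left ht.2]
      field_simp
  have h2 : ∫ t in Set.Ioi m, (t^2)⁻¹ * min t m = 1 := by
    rw [setIntegral_congr_fun measurableSet_Ioi (g := fun t : ℝ => (t^2)⁻¹ * m)
      (fun t ht => by rw [min_eq_right (le_of_lt ht)]),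
      integral_Ioi_sq_inv_mul_const (lt_of_lt_of_le one_pos hm)]
    field_simp
  rw [h1, h2]

lemma erM_min_sq_moment {m : ℝ} (hm : 1 ≤ m) :
    ∫ t, (min t m)^2 ∂erM = 2*m - 1 := by
  have hm0 : 0 < m := lt_of_lt_of_le one_pos hm
  rw [erM_integral, ← Set.Ioc_union_Ioi_eq_Ioi hm,
    setIntegral_union Set.Ioc_disjoint_Ioi_same measurableSet_Ioi
      (integrableOn_sq_inv_mul one_pos (Continuous.continuousOn (f := fun t : ℝ => (min t m)^2) (by fun_prop)))
      ((integrableOn_Ioi_sq_inv_mul_const (k := m^2) hm0).congr_fun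
        (fun t ht => by rw [min_eq_right (le_of_lt ht)]) measurableSet_Ioi)]
  have h1 : ∫ t in Set.Ioc 1 m, (t^2)⁻¹ * (min t m)^2 = m - 1 := by
    rw [setIntegral_congr_fun measurableSet_Ioc (g := fun _ : ℝ => (1:ℝ)) ?_]
    · simp [Real.volume_Ioc, ENNReal.toReal_ofReal (by linarith : (0:ℝ) ≤ m - 1), hm]
    · intro t ht
      have ht0 : t ≠ 0 := by have := ht.1; positivity
      show (t^2)⁻¹ * (min t m)^2 = 1
      rw [min_eq_left ht.2]
      field_simp
  have h2 : ∫ t in Set.Ioi m, (t^2)⁻¹ * (min t m)^2 = m := by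
    rw [setIntegral_congr_fun measurableSet_Ioi (g := fun t : ℝ => (t^2)⁻¹ * m^2)
      (fun t ht => by rw [min_eq_right (le_of_lt ht)]),
      integral_Ioi_sq_inv_mul_const hm0]
    field_simp
  rw [h1, h2]
  ring


/-- Lemma 1 (first part): for `n ≥ 2` i.i.d. equal-revenue random variables `I_1, …, I_n`,
`P[(1/n) Σ I_i ≥ (log n)/2] ≥ 1/2`. -/
theorem er_average_lower_tail
    {Ω : Type*} [MeasurableSpace Ω] (μ : Measure Ω) [IsProbabilityMeasure μ]
    (n : ℕ) (hn : 2 ≤ n) (I : Fin n → Ω → ℝ)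
    (hmeas : ∀ i, Measurable (I i))
    (hindep : ProbabilityTheory.iIndepFun I μ)
    (hsupp : ∀ i, ∀ᵐ ω ∂μ, 1 ≤ I i ω)
    (hcdf : ∀ i, ∀ x : ℝ, 1 ≤ x → (μ {ω | I i ω ≤ x}).toReal = 1 - 1 / x) :
    (1 : ℝ) / 2 ≤ (μ {ω | Real.log n / 2 ≤ (1 / (n : ℝ)) * ∑ i, I i ω}).toReal := by
  set m : ℝ := (n : ℝ) with hmdef
  have hm2 : (2:ℝ) ≤ m := by rw [hmdef]; exact_mod_cast hn
  have hm1 : (1:ℝ) ≤ m := by linarith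
  have hm0 : (0:ℝ) < m := by linarith
  set L : ℝ := Real.log m with hLdef
  have hL0 : 0 ≤ L := Real.log_nonneg hm1
  set A : Set Ω := {ω | Real.log n / 2 ≤ (1 / (n : ℝ)) * ∑ i, I i ω} with hAdef
  have hAmeas : MeasurableSet A := by
    apply measurableSet_le measurable_const
    exact (Finset.measurable_sum Finset.univ fun i _ => hmeas i).const_mul _
  have hadd : (μ A).toReal + (μ Aᶜ).toReal = 1 := by
    rw [← ENNReal.toReal_add (measure_ne_top μ _) (measure_ne_top μ _),
      measure_add_measure_compl hAmeas, measure_univ, ENNReal.toReal_one]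
  suffices hgoal : (μ Aᶜ).toReal ≤ 1/2 by linarith
  by_cases hcase : L ≤ 2
  · -- trivial case: a.e. ω ∈ A
    have hae : ∀ᵐ ω ∂μ, ω ∈ A := by
      filter_upwards [MeasureTheory.ae_all_iff.2 hsupp] with ω hω
      have hsum : m ≤ ∑ i, I i ω := by
        calc m = ∑ _i : Fin n, (1:ℝ) := by simp [hmdef]
        _ ≤ ∑ i, I i ω := Finset.sum_le_sum fun i _ => hω i
      have h1 : (1:ℝ) ≤ (1 / m) * ∑ i, I i ω := by
        rw [one_div, inv_mul_eq_div, le_div_iff₀ hm0, one_mul]; exact hsum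
      show Real.log n / 2 ≤ (1 / (n:ℝ)) * ∑ i, I i ω
      calc Real.log n / 2 = L / 2 := rfl
      _ ≤ 1 := by linarith
      _ ≤ _ := h1
    have h0 : μ Aᶜ = 0 := by
      have := MeasureTheory.ae_iff.mp hae
      simpa [Set.compl_def] using this
    simp [h0]
  · push_neg at hcase
    have hL2 : (2:ℝ) ≤ L := hcase.le
    -- truncated variables
    set Y : Fin n → Ω → ℝ := fun i ω => min (I i ω) m with hYdef
    have hYmeas : ∀ i, Measurable (Y i) := fun i => (hmeas i).min measurable_const
    have hYmem : ∀ i, MemLp (Y i) 2 μ := by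
      intro i
      apply MemLp.of_bound (hYmeas i).aestronglyMeasurable m
      filter_upwards [hsupp i] with ω hω
      have hY0 : (0:ℝ) ≤ Y i ω := le_trans zero_le_one (le_min hω hm1)
      rw [Real.norm_eq_abs, abs_of_nonneg hY0]
      exact min_le_right _ _
    have hlaw : ∀ i, μ.map (I i) = erM := fun i => law_eq μ (I i) (hmeas i) (hsupp i) (hcdf i)
    have hEY : ∀ i, ∫ ω, Y i ω ∂μ = L + 1 := by
      intro i
      have := MeasureTheory.integral_map (μ := μ) (hmeas i).aemeasurable
        (f := fun t => min t m) (measurable_id.min measurable_const).aestronglyMeasurable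
      rw [hYdef]
      simp only []
      rw [← this, hlaw i, erM_min_moment hm1]
    have hEY2 : ∀ i, ∫ ω, (Y i ω)^2 ∂μ = 2*m - 1 := by
      intro i
      have := MeasureTheory.integral_map (μ := μ) (hmeas i).aemeasurable
        (f := fun t => (min t m)^2)
        ((measurable_id.min measurable_const).pow_const 2).aestronglyMeasurable
      rw [hYdef]
      simp only []
      rw [← this, hlaw i, erM_min_sq_moment hm1]
    have hvarY : ∀ i, ProbabilityTheory.variance (Y i) μ ≤ 2*m - 1 := by
      intro i
      rw [ProbabilityTheory.variance_eq_sub (hYmem i)]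
      have h2 : ∫ ω, (Y i ^ 2) ω ∂μ = 2*m - 1 := by
        simp only [Pi.pow_apply]; exact hEY2 i
      rw [h2]
      nlinarith [sq_nonneg (∫ ω, Y i ω ∂μ)]
    set S : Ω → ℝ := ∑ i, Y i with hSdef
    have hSmem : MemLp S 2 μ := memLp_finset_sum' _ fun i _ => hYmem i
    have hpair : Set.Pairwise ↑(Finset.univ : Finset (Fin n))
        fun i j => ProbabilityTheory.IndepFun (Y i) (Y j) μ := by
      intro i _ j _ hij
      exact (hindep.indepFun hij).comp
        (measurable_id.min measurable_const) (measurable_id.min measurable_const)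
    have hvarS : ProbabilityTheory.variance S μ ≤ m * (2*m - 1) := by
      rw [hSdef, ProbabilityTheory.IndepFun.variance_sum (fun i _ => hYmem i) hpair]
      calc ∑ i, ProbabilityTheory.variance (Y i) μ ≤ ∑ _i : Fin n, (2*m-1) :=
        Finset.sum_le_sum fun i _ => hvarY i
      _ = m * (2*m-1) := by simp [mul_comm]; rw [hmdef]; ring
    have hES : ∫ ω, S ω ∂μ = m * (L + 1) := by
      rw [hSdef]
      have : ∫ ω, (∑ i, Y i) ω ∂μ = ∑ i, ∫ ω, Y i ω ∂μ := by
        simp only [Finset.sum_apply]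
        exact MeasureTheory.integral_finset_sum _ fun i _ => (hYmem i).integrable one_le_two
      rw [this]
      simp only [hEY, Finset.sum_const, Finset.card_univ, Fintype.card_fin, nsmul_eq_mul]
      rw [hmdef]
    set c : ℝ := m * (1 + L/2) with hcdef
    have hc : 0 < c := by rw [hcdef]; nlinarith
    have hcheb := ProbabilityTheory.meas_ge_le_variance_div_sq hSmem hc
    have hbound : ProbabilityTheory.variance S μ / c^2 ≤ 1/2 := by
      rw [div_le_iff₀ (by positivity)]
      have h1 : m * (2*m-1) ≤ 2*m^2 := by nlinarith
      have h2 : 2*m^2 ≤ 1/2 * c^2 := by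
        rw [hcdef]
        nlinarith [sq_nonneg (L-2), sq_nonneg m, mul_pos hm0 hm0, sq_nonneg (m*(L-2))]
      linarith [hvarS]
    have hsub : Aᶜ ⊆ {ω | c ≤ |S ω - ∫ ω', S ω' ∂μ|} := by
      intro ω hω
      simp only [Set.mem_compl_iff, hAdef, Set.mem_setOf_eq, not_le] at hω
      rw [← hmdef, ← hLdef] at hω
      have hSle : S ω ≤ ∑ i, I i ω := by
        rw [hSdef]; simp only [Finset.sum_apply]
        exact Finset.sum_le_sum fun i _ => min_le_left _ _
      have hsumlt : ∑ i, I i ω < m * (L/2) := by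
        rw [one_div, inv_mul_lt_iff₀ hm0] at hω
        linarith
      have hkey : c ≤ -(S ω - ∫ ω', S ω' ∂μ) := by
        rw [hES, hcdef]
        nlinarith
      exact Set.mem_setOf_eq ▸ le_abs.2 (Or.inr hkey)
    have hfinal : μ Aᶜ ≤ ENNReal.ofReal (1/2) :=
      le_trans (measure_mono hsub) (le_trans hcheb (ENNReal.ofReal_le_ofReal hbound))
    exact ENNReal.toReal_le_of_le_ofReal (by norm_num) hfinal
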